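/- For every strongly binary tree T and every cut y of T, K̃(T,y) ≤ s(T); moreover, the cut y₁ that assigns 1 to every leaf and 0 to every internal node (inducing the all-singletons clustering) satisfies K̃(T,y₁) = s(T). Hence the maximum of K̃(T,·) over all cuts of T equals s(T). -/

import Mathlib

/-- A strongly binary tree: either a single leaf, or an internal node with an
ordered pair of strongly binary subtrees. -/
inductive SBTree where
  | leaf : SBTree
  | node : SBTree → SBTree → SBTree
deriving DecidableEq

/-- The subtree of `T` sitting at the position described by the path `p`
(`false` = go to the left child, `true` = go to the right child), if it exists.
Positions `p` with `subtreeAt T p ≠ none` are the nodes of `T`; the root is `[]`,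
and the parent of a nonroot node `p` is `p.dropLast`. -/
def SBTree.subtreeAt : SBTree → List Bool → Option SBTree
  | t, [] => some t
  | .leaf, _ :: _ => none
  | .node l r, b :: p => (if b then r else l).subtreeAt p

/-- `p` is a node of `T`. -/
def SBTree.IsNodePos (T : SBTree) (p : List Bool) : Prop := (T.subtreeAt p).isSome

/-- `p` is a leaf of `T`. -/
def SBTree.IsLeafPos (T : SBTree) (p : List Bool) : Prop := T.subtreeAt p = some .leaf

/-- `p` is an internal node of `T`. -/
def SBTree.IsInternalPos (T : SBTree) (p : List Bool) : Prop :=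
  ∃ l r, T.subtreeAt p = some (.node l r)

/-- A cut of `T`: an assignment `y` of `{0,1}` (here `Bool`) to the nodes of `T`
(normalized to `false` outside the tree) such that every leaf is assigned `1` and,
whenever an internal node is assigned `1`, both of its children are assigned `1`. -/
def SBTree.IsCut (T : SBTree) (y : List Bool → Bool) : Prop :=
  (∀ p, ¬ T.IsNodePos p → y p = false) ∧
  (∀ p, T.IsLeafPos p → y p = true) ∧
  (∀ p, T.IsInternalPos p → y p = true →
    y (p ++ [false]) = true ∧ y (p ++ [true]) = true)

/-- The lower boundary `LB(y)` of a cut: the nodes `v` with `y v = 1` such that `v`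
is the root or `y (parent v) = 0`; its cardinality is the number of clusters
induced by the cut. -/
def SBTree.LB (T : SBTree) (y : List Bool → Bool) : Set (List Bool) :=
  {p | T.IsNodePos p ∧ y p = true ∧ (p = [] ∨ y p.dropLast = false)}

/-- The set `T'_y`: internal nodes `v` of `T` such that either `y v = 0`, or
`y v = 1` and (`v` is the root or `y (parent v) = 0`). -/
def SBTree.Tset (T : SBTree) (y : List Bool → Bool) : Set (List Bool) :=
  {p | T.IsInternalPos p ∧
    (y p = false ∨ (y p = true ∧ (p = [] ∨ y p.dropLast = false)))}

/-- `K̃(T,y)`: the number of nodes of `T'_y` having no child in `T'_y`. -/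
noncomputable def SBTree.Ktilde (T : SBTree) (y : List Bool → Bool) : ℕ :=
  Set.ncard {p | p ∈ T.Tset y ∧ (p ++ [false]) ∉ T.Tset y ∧ (p ++ [true]) ∉ T.Tset y}

/-- The number of cherries `s(T)`: internal nodes both of whose children are leaves
(equivalently, the number of pairs of sibling leaves `|L_s(T)|`). -/
def SBTree.cherries : SBTree → ℕ
  | .leaf => 0
  | .node .leaf .leaf => 1
  | .node l r => l.cherries + r.cherries

lemma SBTree.subtreeAt_append (t : SBTree) (p q : List Bool) :
    t.subtreeAt (p ++ q) = (t.subtreeAt p).bind (fun s => s.subtreeAt q) := by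
  induction p generalizing t with
  | nil => simp [subtreeAt]
  | cons b p ih =>
    cases t with
    | leaf => simp [subtreeAt]
    | node l r => simp only [List.cons_append, subtreeAt]; exact ih _

lemma SBTree.isNodePos_prefix {T : SBTree} {p q : List Bool}
    (h : T.IsNodePos (p ++ q)) : T.IsNodePos p := by
  unfold IsNodePos at *
  rw [subtreeAt_append] at h
  cases hs : T.subtreeAt p with
  | none => rw [hs] at h; simp at h
  | some s => simp

lemma SBTree.isInternal_of_child {T : SBTree} {p : List Bool} {b : Bool} {q : List Bool}
    (h : T.IsNodePos (p ++ b :: q)) : T.IsInternalPos p := by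
  rw [IsNodePos, subtreeAt_append] at h
  cases hs : T.subtreeAt p with
  | none => rw [hs] at h; simp at h
  | some s =>
    rw [hs] at h
    cases s with
    | leaf => simp [subtreeAt] at h
    | node l r => exact ⟨l, r, hs⟩

lemma SBTree.allOne {T : SBTree} {y : List Bool → Bool} (hc : T.IsCut y) :
    ∀ (q p : List Bool), y p = true → T.IsNodePos (p ++ q) → y (p ++ q) = true := by
  intro q
  induction q with
  | nil => intro p hp _; simpa using hp
  | cons b q ih =>
    intro p hp hnode
    have hint : T.IsInternalPos p := isInternal_of_child hnode
    have hchild := hc.2.2 p hint hp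
    have h1 : y (p ++ [b]) = true := by
      cases b
      · exact hchild.1
      · exact hchild.2
    have heq : p ++ b :: q = (p ++ [b]) ++ q := by simp
    rw [heq] at hnode ⊢
    exact ih _ h1 hnode

-- firstCherry
def SBTree.firstCherry : SBTree → List Bool
  | .leaf => []
  | .node l r => match l with
    | .node _ _ => false :: firstCherry l
    | .leaf => match r with
      | .node _ _ => true :: firstCherry r
      | .leaf => []

lemma SBTree.firstCherry_spec : ∀ (t : SBTree), t ≠ .leaf →
    t.subtreeAt t.firstCherry = some (.node .leaf .leaf) := by
  intro t
  induction t with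
  | leaf => intro h; exact absurd rfl h
  | node l r ihl ihr =>
    intro _
    cases l with
    | node a b => simp only [firstCherry, subtreeAt, if_neg]; exact ihl (by simp)
    | leaf =>
      cases r with
      | node a b => simp only [firstCherry, subtreeAt, if_pos]; exact ihr (by simp)
      | leaf => simp [firstCherry, subtreeAt]

def SBTree.cherryFinset : SBTree → Finset (List Bool)
  | .leaf => ∅
  | .node l r =>
      (if l = .leaf ∧ r = .leaf then {([] : List Bool)} else ∅)
      ∪ (cherryFinset l).image (List.cons false)
      ∪ (cherryFinset r).image (List.cons true)

lemma SBTree.mem_cherryFinset : ∀ (t : SBTree) (p : List Bool),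
    p ∈ t.cherryFinset ↔ t.subtreeAt p = some (.node .leaf .leaf) := by
  intro t
  induction t with
  | leaf =>
    intro p
    cases p with
    | nil => simp [cherryFinset, subtreeAt]
    | cons b q => simp [cherryFinset, subtreeAt]
  | node l r ihl ihr =>
    intro p
    cases p with
    | nil =>
      simp only [cherryFinset, Finset.mem_union, Finset.mem_image, subtreeAt]
      constructor
      · rintro ((h | ⟨q, _, h⟩) | ⟨q, _, h⟩)
        · split at h
          · next hlr => simp [hlr.1, hlr.2]
          · simp at h
        · simp at h
        · simp at h
      · intro h
        have h1 : l = SBTree.leaf ∧ r = SBTree.leaf := by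
          injection h with h'; injection h' with h1 h2; exact ⟨h1, h2⟩
        left; left; rw [if_pos h1]; simp
    | cons b q =>
      simp only [cherryFinset, Finset.mem_union, Finset.mem_image, subtreeAt]
      cases b with
      | false =>
        simp only [if_neg (Bool.false_ne_true)]
        constructor
        · rintro ((h | ⟨q', hq', h⟩) | ⟨q', hq', h⟩)
          · split at h <;> simp at h
          · obtain rfl : q' = q := by injection h
            exact (ihl _).1 hq'
          · injection h with h1 h2; exact absurd h1 (by simp)
        · intro h
          left; right; exact ⟨q, (ihl q).2 h, rfl⟩
      | true =>
        simp only [if_pos rfl]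
        constructor
        · rintro ((h | ⟨q', hq', h⟩) | ⟨q', hq', h⟩)
          · split at h <;> simp at h
          · injection h with h1 h2; exact absurd h1 (by simp)
          · obtain rfl : q' = q := by injection h
            exact (ihr _).1 hq'
        · intro h
          right; exact ⟨q, (ihr q).2 h, rfl⟩

lemma SBTree.card_cherryFinset : ∀ (t : SBTree), t.cherryFinset.card = t.cherries := by
  intro t
  induction t with
  | leaf => simp [cherryFinset, cherries]
  | node l r ihl ihr =>
    by_cases hlr : l = SBTree.leaf ∧ r = SBTree.leaf
    · obtain ⟨rfl, rfl⟩ := hlr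
      simp [cherryFinset, cherries]
    · have hdisj : Disjoint ((cherryFinset l).image (List.cons false))
        ((cherryFinset r).image (List.cons true)) := by
        simp only [Finset.disjoint_left, Finset.mem_image]
        rintro x ⟨q, _, rfl⟩ ⟨q', _, h⟩
        injection h with h1; exact absurd h1 (by simp)
      have hch : (SBTree.node l r).cherries = l.cherries + r.cherries := by
        cases l with
        | node a b => rfl
        | leaf =>
          cases r with
          | node a b => rfl
          | leaf => exact absurd ⟨rfl, rfl⟩ hlr
      rw [cherryFinset, if_neg hlr, hch, Finset.empty_union,
        Finset.card_union_of_disjoint hdisj,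
        Finset.card_image_of_injective _ List.cons_injective,
        Finset.card_image_of_injective _ List.cons_injective, ihl, ihr]

def SBTree.Sset (T : SBTree) (y : List Bool → Bool) : Set (List Bool) :=
  {p | p ∈ T.Tset y ∧ (p ++ [false]) ∉ T.Tset y ∧ (p ++ [true]) ∉ T.Tset y}

lemma SBTree.Ktilde_eq (T : SBTree) (y : List Bool → Bool) :
    T.Ktilde y = (T.Sset y).ncard := rfl

def SBTree.cherryPath (T : SBTree) (p : List Bool) : List Bool :=
  match T.subtreeAt p with
  | some t => t.firstCherry
  | none => []

lemma SBTree.cherryPath_spec {T : SBTree} {p : List Bool} (h : T.IsInternalPos p) :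
    T.subtreeAt (p ++ T.cherryPath p) = some (.node .leaf .leaf) := by
  obtain ⟨l, r, hs⟩ := h
  rw [subtreeAt_append, hs]
  simp only [Option.bind_some, cherryPath, hs]
  exact firstCherry_spec _ (by simp)

lemma SBTree.child_mem_Tset {T : SBTree} {y : List Bool → Bool} {p : List Bool} {b : Bool}
    (hyp : y p = false) (hint : T.IsInternalPos (p ++ [b])) : (p ++ [b]) ∈ T.Tset y := by
  refine ⟨hint, ?_⟩
  cases hcb : y (p ++ [b]) with
  | false => exact Or.inl rfl
  | true =>
    right
    refine ⟨rfl, Or.inr ?_⟩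
    rw [List.dropLast_concat]
    exact hyp

lemma SBTree.cherry_of_mem_Sset_false {T : SBTree} {y : List Bool → Bool} {p : List Bool}
    (hS : p ∈ T.Sset y) (hyp : y p = false) :
    T.subtreeAt p = some (.node .leaf .leaf) := by
  obtain ⟨⟨⟨l, r, hs⟩, _⟩, hf, ht⟩ := hS
  have hchild : ∀ b : Bool, T.subtreeAt (p ++ [b]) = some (if b then r else l) := by
    intro b
    rw [subtreeAt_append, hs]
    simp [subtreeAt]
  have hl : l = .leaf := by
    cases hlc : l with
    | leaf => rfl
    | node a c =>
      exfalso
      apply hf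
      apply child_mem_Tset hyp
      exact ⟨a, c, by rw [hchild false]; simp [hlc]⟩
  have hr : r = .leaf := by
    cases hrc : r with
    | leaf => rfl
    | node a c =>
      exfalso
      apply ht
      apply child_mem_Tset hyp
      exact ⟨a, c, by rw [hchild true]; simp [hrc]⟩
  rw [hs, hl, hr]

lemma SBTree.no_strict_descendant {T : SBTree} {y : List Bool → Bool} (hc : T.IsCut y)
    {p r : List Bool} (hyp : y p = true) (hr : r ≠ []) (hmem : (p ++ r) ∈ T.Tset y) :
    False := by
  obtain ⟨hint, hdisj⟩ := hmem
  have hnode : T.IsNodePos (p ++ r) := by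
    obtain ⟨l, s, h⟩ := hint
    rw [IsNodePos, h]; rfl
  have hy1 : y (p ++ r) = true := allOne hc r p hyp hnode
  rcases hdisj with h0 | ⟨_, hbd⟩
  · rw [hy1] at h0; simp at h0
  rcases hbd with hnil | hpar
  · exact hr (List.append_eq_nil_iff.mp hnil).2
  · have hdl : (p ++ r).dropLast = p ++ r.dropLast := List.dropLast_append_of_ne_nil hr
    have hnode' : T.IsNodePos (p ++ r.dropLast) := by
      apply isNodePos_prefix (q := [r.getLast hr])
      have : (p ++ r.dropLast) ++ [r.getLast hr] = p ++ r := by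
        rw [List.append_assoc, List.dropLast_append_getLast hr]
      rwa [this]
    have := allOne hc r.dropLast p hyp hnode'
    rw [hdl, this] at hpar
    simp at hpar

lemma SBTree.upper (T : SBTree) (y : List Bool → Bool) (hc : T.IsCut y) :
    T.Ktilde y ≤ T.cherries := by
  rw [Ktilde_eq, ← card_cherryFinset, ← Set.ncard_coe_finset]
  apply Set.ncard_le_ncard_of_injOn
    (f := fun p => if y p = true then p ++ T.cherryPath p else p)
  · intro p hp
    simp only [Finset.coe_sort_coe, Set.mem_setOf_eq, Finset.mem_coe, mem_cherryFinset]
    by_cases hyp : y p = true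
    · rw [if_pos hyp]
      exact cherryPath_spec hp.1.1
    · rw [if_neg hyp]
      exact cherry_of_mem_Sset_false hp (by simpa using hyp)
  · intro p hp p' hp' heq
    simp only at heq
    have key : ∀ a a' : List Bool, a ∈ T.Sset y → a' ∈ T.Sset y → y a = true →
        a <+: a' → a = a' := by
      intro a a' ha ha' hya hpre
      obtain ⟨r, rfl⟩ := hpre
      rcases eq_or_ne r [] with rfl | hr
      · simp
      · exact absurd (no_strict_descendant hc hya hr ha'.1) (by simp)
    by_cases hyp : y p = true <;> by_cases hyp' : y p' = true
    · rw [if_pos hyp, if_pos hyp'] at heq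
      have h1 : p <+: p ++ T.cherryPath p := ⟨_, rfl⟩
      have h2 : p' <+: p ++ T.cherryPath p := heq ▸ ⟨_, rfl⟩
      rcases List.prefix_or_prefix_of_prefix h1 h2 with h | h
      · exact key p p' hp hp' hyp h
      · exact (key p' p hp' hp hyp' h).symm
    · rw [if_pos hyp, if_neg hyp'] at heq
      exact key p p' hp hp' hyp ⟨_, heq⟩
    · rw [if_neg hyp, if_pos hyp'] at heq
      exact (key p' p hp' hp hyp' ⟨_, heq.symm⟩).symm
    · rw [if_neg hyp, if_neg hyp'] at heq
      exact heq

lemma SBTree.cut_y1 (T : SBTree) :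
    T.IsCut (fun p => decide (T.subtreeAt p = some SBTree.leaf)) := by
  refine ⟨?_, ?_, ?_⟩
  · intro p hp
    have : T.subtreeAt p = none := by
      rw [IsNodePos] at hp
      exact Option.not_isSome_iff_eq_none.mp hp
    simp [this]
  · intro p hp
    rw [IsLeafPos] at hp
    simp [hp]
  · intro p ⟨l, r, hs⟩ hy
    simp [hs] at hy
lemma SBTree.Sset_y1 (T : SBTree) :
    T.Sset (fun p => decide (T.subtreeAt p = some SBTree.leaf)) = ↑T.cherryFinset := by
  set y : List Bool → Bool := fun p => decide (T.subtreeAt p = some SBTree.leaf) with hy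
  ext p
  simp only [Finset.coe_sort_coe, Finset.mem_coe, mem_cherryFinset]
  constructor
  · rintro ⟨⟨⟨l, r, hs⟩, _⟩, hf, ht⟩
    have hchild : ∀ b : Bool, T.subtreeAt (p ++ [b]) = some (if b then r else l) := by
      intro b; rw [subtreeAt_append, hs]; simp [subtreeAt]
    have hl : l = .leaf := by
      cases hlc : l with
      | leaf => rfl
      | node a c =>
        exfalso; apply hf
        refine ⟨⟨a, c, by rw [hchild false]; simp [hlc]⟩, Or.inl ?_⟩
        simp [hy, hchild false, hlc]
    have hr : r = .leaf := by
      cases hrc : r with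
      | leaf => rfl
      | node a c =>
        exfalso; apply ht
        refine ⟨⟨a, c, by rw [hchild true]; simp [hrc]⟩, Or.inl ?_⟩
        simp [hy, hchild true, hrc]
    rw [hs, hl, hr]
  · intro h
    have hchild : ∀ b : Bool, T.subtreeAt (p ++ [b]) = some .leaf := by
      intro b; rw [subtreeAt_append, h]; simp [subtreeAt]
    refine ⟨⟨⟨.leaf, .leaf, h⟩, Or.inl (by simp [hy, h])⟩, ?_, ?_⟩
    · rintro ⟨⟨a, c, hac⟩, _⟩
      rw [hchild false] at hac
      simp at hac
    · rintro ⟨⟨a, c, hac⟩, _⟩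
      rw [hchild true] at hac
      simp at hac

lemma SBTree.Ktilde_y1 (T : SBTree) :
    T.Ktilde (fun p => decide (T.subtreeAt p = some SBTree.leaf)) = T.cherries := by
  rw [Ktilde_eq, Sset_y1, Set.ncard_coe_finset, card_cherryFinset]

theorem Ktilde_le_cherries_and_max' :
    (∀ (T : SBTree) (y : List Bool → Bool), T.IsCut y → T.Ktilde y ≤ T.cherries) ∧
    (∀ T : SBTree,
      T.IsCut (fun p => decide (T.subtreeAt p = some SBTree.leaf)) ∧
      T.Ktilde (fun p => decide (T.subtreeAt p = some SBTree.leaf)) = T.cherries) ∧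
    (∀ T : SBTree,
      IsGreatest {k : ℕ | ∃ y, T.IsCut y ∧ T.Ktilde y = k} T.cherries) := by
  refine ⟨SBTree.upper, fun T => ⟨T.cut_y1, T.Ktilde_y1⟩, fun T => ⟨⟨_, T.cut_y1, T.Ktilde_y1⟩, ?_⟩⟩
  rintro k ⟨y, hc, rfl⟩
  exact SBTree.upper T y hc

/-- For every strongly binary tree `T` and cut `y`, `K̃(T,y) ≤ s(T)`; moreover, the
cut assigning `1` to every leaf and `0` to every internal node (inducing the
all-singletons clustering) is a cut achieving `K̃ = s(T)`. Hence the maximum of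
`K̃(T,·)` over all cuts of `T` equals `s(T)`. -/
theorem Ktilde_le_cherries_and_max :
    (∀ (T : SBTree) (y : List Bool → Bool), T.IsCut y → T.Ktilde y ≤ T.cherries) ∧
    (∀ T : SBTree,
      T.IsCut (fun p => decide (T.subtreeAt p = some SBTree.leaf)) ∧
      T.Ktilde (fun p => decide (T.subtreeAt p = some SBTree.leaf)) = T.cherries) ∧
    (∀ T : SBTree,
      IsGreatest {k : ℕ | ∃ y, T.IsCut y ∧ T.Ktilde y = k} T.cherries) := by
  exact Ktilde_le_cherries_and_max'
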